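/- arXiv:2101.06767 — 5 statements merged into one kernel-verified Lean document; each statement's English description precedes it below -/
import Mathlib

section
/- Each of the following wedge products with ω∧ω vanishes (componentwise): (e×f)∧ω∧ω = 0, (e×e−f×f)∧ω∧ω = 0, (e×e+f×f)∧ω∧ω = 0, and for all indices i ≠ j the (i,j) entry of [e]∧[f] − [f]∧[e] satisfies ([e]∧[f]−[f]∧[e])ᵢⱼ ∧ ω∧ω = 0. -/
open Matrix

noncomputable section

variable {R : Type*} [CommRing R] {M : Type*} [AddCommGroup M] [Module R M]

/-- `x` is a degree-1 element of the exterior algebra `Λ(M)`, i.e. it lies in the image of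
the canonical inclusion `ι : M → Λ(M)`. -/
def IsDeg1 (x : ExteriorAlgebra R M) : Prop :=
  ∃ m : M, ExteriorAlgebra.ι R m = x

/-- `x` is a degree-2 element of the exterior algebra `Λ(M)`, i.e. an `R`-linear combination
of products of two degree-1 elements. -/
def IsDeg2 (x : ExteriorAlgebra R M) : Prop :=
  x ∈ (LinearMap.range (ExteriorAlgebra.ι R (M := M)) ^ 2 :
    Submodule R (ExteriorAlgebra R M))

/-- For a 3×1 vector `a`, `box a = [a]` is the 3×3 matrix with rows
`(0, a₃, −a₂)`, `(−a₃, 0, a₁)`, `(a₂, −a₁, 0)`. -/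
def box (a : Matrix (Fin 3) (Fin 1) (ExteriorAlgebra R M)) :
    Matrix (Fin 3) (Fin 3) (ExteriorAlgebra R M) :=
  !![0, a 2 0, -(a 1 0); -(a 2 0), 0, a 0 0; a 1 0, -(a 0 0), 0]

/-- The cross product `a × b` of 3×1 vectors over the exterior algebra. -/
def cross (a b : Matrix (Fin 3) (Fin 1) (ExteriorAlgebra R M)) :
    Matrix (Fin 3) (Fin 1) (ExteriorAlgebra R M) :=
  !![a 1 0 * b 2 0 - a 2 0 * b 1 0;
     a 2 0 * b 0 0 - a 0 0 * b 2 0;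
     a 0 0 * b 1 0 - a 1 0 * b 0 0]

/-- `ω = e₁∧f₁ + e₂∧f₂ + e₃∧f₃`. -/
def om (e f : Matrix (Fin 3) (Fin 1) (ExteriorAlgebra R M)) : ExteriorAlgebra R M :=
  e 0 0 * f 0 0 + e 1 0 * f 1 0 + e 2 0 * f 2 0

/-- `ImΩ = f₁∧e₂∧e₃ + f₂∧e₃∧e₁ + f₃∧e₁∧e₂ − f₁∧f₂∧f₃`. -/
def imOm (e f : Matrix (Fin 3) (Fin 1) (ExteriorAlgebra R M)) : ExteriorAlgebra R M :=
  f 0 0 * e 1 0 * e 2 0 + f 1 0 * e 2 0 * e 0 0 + f 2 0 * e 0 0 * e 1 0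
    - f 0 0 * f 1 0 * f 2 0

/-- A 7×7 matrix assembled from blocks of sizes 1, 3, 3. -/
def blk {α : Type*} (P : Matrix (Fin 1) (Fin 1) α) (Q S : Matrix (Fin 1) (Fin 3) α)
    (T : Matrix (Fin 3) (Fin 1) α) (U V : Matrix (Fin 3) (Fin 3) α)
    (W : Matrix (Fin 3) (Fin 1) α) (X Y : Matrix (Fin 3) (Fin 3) α) :
    Matrix (Fin 1 ⊕ (Fin 3 ⊕ Fin 3)) (Fin 1 ⊕ (Fin 3 ⊕ Fin 3)) α :=
  Matrix.fromBlocks P (Matrix.fromCols Q S) (Matrix.fromRows T W)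
    (Matrix.fromBlocks U V X Y)

/-- The 3×3 scalar diagonal matrix `x·I₃`. -/
def dg {α : Type*} [Zero α] (x : α) : Matrix (Fin 3) (Fin 3) α :=
  Matrix.diagonal fun _ => x

/-- The 7×7 block matrix `𝓘 = [[0,0,0],[0,0,−I],[0,I,0]]`. -/
def calI (α : Type*) [Ring α] :
    Matrix (Fin 1 ⊕ (Fin 3 ⊕ Fin 3)) (Fin 1 ⊕ (Fin 3 ⊕ Fin 3)) α :=
  blk 0 0 0 0 0 (-1) 0 1 0

/-- `B = [[0, fᵀ, −eᵀ], [−f, 0, −e₀I], [e, e₀I, 0]]`. -/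
def Bmat (e f : Matrix (Fin 3) (Fin 1) (ExteriorAlgebra R M)) (e0 : ExteriorAlgebra R M) :
    Matrix (Fin 1 ⊕ (Fin 3 ⊕ Fin 3)) (Fin 1 ⊕ (Fin 3 ⊕ Fin 3)) (ExteriorAlgebra R M) :=
  blk 0 (fᵀ) (-(eᵀ)) (-f) 0 (-(dg e0)) e (dg e0) 0

/-- `C = [[0, fᵀ, −eᵀ], [−f, −[e], e₀I+[f]], [e, −e₀I+[f], [e]]]`. -/
def Cmat (e f : Matrix (Fin 3) (Fin 1) (ExteriorAlgebra R M)) (e0 : ExteriorAlgebra R M) :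
    Matrix (Fin 1 ⊕ (Fin 3 ⊕ Fin 3)) (Fin 1 ⊕ (Fin 3 ⊕ Fin 3)) (ExteriorAlgebra R M) :=
  blk 0 (fᵀ) (-(eᵀ)) (-f) (-(box e)) (dg e0 + box f) e (-(dg e0) + box f) (box e)

/-- `F_A = [[0,0,0],[0,α,β],[0,−β,α]]`. -/
def FA (a b : Matrix (Fin 3) (Fin 3) (ExteriorAlgebra R M)) :
    Matrix (Fin 1 ⊕ (Fin 3 ⊕ Fin 3)) (Fin 1 ⊕ (Fin 3 ⊕ Fin 3)) (ExteriorAlgebra R M) :=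
  blk 0 0 0 0 a b 0 (-b) a

/-- `Q₋^δ = e₀ ∧ [[0, (1+δ)eᵀ, (1+δ)fᵀ], [−(1+δ)e, −2δ[f], −2δ[e]], [−(1+δ)f, −2δ[e], 2δ[f]]]`. -/
def Qminus (e f : Matrix (Fin 3) (Fin 1) (ExteriorAlgebra R M)) (e0 : ExteriorAlgebra R M)
    (δ : R) :
    Matrix (Fin 1 ⊕ (Fin 3 ⊕ Fin 3)) (Fin 1 ⊕ (Fin 3 ⊕ Fin 3)) (ExteriorAlgebra R M) :=
  (blk 0 ((1 + δ) • (eᵀ)) ((1 + δ) • (fᵀ))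
      (-((1 + δ) • e)) (-((2 * δ) • box f)) (-((2 * δ) • box e))
      (-((1 + δ) • f)) (-((2 * δ) • box e)) ((2 * δ) • box f)).map fun x => e0 * x

/-- `Q₊^δ`. -/
def Qplus (e f : Matrix (Fin 3) (Fin 1) (ExteriorAlgebra R M)) (δ : R) :
    Matrix (Fin 1 ⊕ (Fin 3 ⊕ Fin 3)) (Fin 1 ⊕ (Fin 3 ⊕ Fin 3)) (ExteriorAlgebra R M) :=
  blk 0 ((2 * δ) • ((cross e f)ᵀ)) (δ • ((cross e e - cross f f)ᵀ))
    (-((2 * δ) • cross e f)) (-((1 + δ) • (f * (fᵀ)))) ((1 + δ) • (f * (eᵀ)))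
    (-(δ • (cross e e - cross f f))) ((1 + δ) • (e * (fᵀ))) (-((1 + δ) • (e * (eᵀ))))

/-- `Q₀`. -/
def Qzero [Algebra ℚ R] (e f : Matrix (Fin 3) (Fin 1) (ExteriorAlgebra R M)) :
    Matrix (Fin 1 ⊕ (Fin 3 ⊕ Fin 3)) (Fin 1 ⊕ (Fin 3 ⊕ Fin 3)) (ExteriorAlgebra R M) :=
  (algebraMap ℚ R (1/2)) •
    blk 0 0 0
      0 (-(box (cross e e + cross f f))) (-((2 : R) • (box e * box f - box f * box e)))
      0 ((2 : R) • (box e * box f - box f * box e)) (-(box (cross e e + cross f f)))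

lemma deg1_sq {x : ExteriorAlgebra R M} (hx : IsDeg1 x) : x * x = 0 := by
  obtain ⟨m, rfl⟩ := hx; exact ExteriorAlgebra.ι_sq_zero m

lemma deg1_anticomm {x y : ExteriorAlgebra R M} (hx : IsDeg1 x) (hy : IsDeg1 y) :
    x * y = -(y * x) := by
  obtain ⟨m, rfl⟩ := hx; obtain ⟨n, rfl⟩ := hy
  exact eq_neg_of_add_eq_zero_left (ExteriorAlgebra.ι_add_mul_swap (R := R) m n)

lemma d1d2 {a b c : ExteriorAlgebra R M} (ha : IsDeg1 a) (hb : IsDeg1 b) (hc : IsDeg1 c) :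
    c * (a * b) = (a * b) * c := by
  calc c * (a * b) = (c * a) * b := (mul_assoc _ _ _).symm
    _ = (-(a * c)) * b := by rw [deg1_anticomm hc ha]
    _ = -(a * (c * b)) := by rw [neg_mul, mul_assoc]
    _ = -(a * (-(b * c))) := by rw [deg1_anticomm hc hb]
    _ = (a * b) * c := by rw [mul_neg, neg_neg, mul_assoc]

lemma d2comm {a b c d : ExteriorAlgebra R M} (ha : IsDeg1 a) (hb : IsDeg1 b)
    (hc : IsDeg1 c) (hd : IsDeg1 d) : (a * b) * (c * d) = (c * d) * (a * b) := by
  calc (a * b) * (c * d) = a * (b * (c * d)) := mul_assoc _ _ _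
    _ = a * ((c * d) * b) := by rw [d1d2 hc hd hb]
    _ = (a * (c * d)) * b := (mul_assoc _ _ _).symm
    _ = ((c * d) * a) * b := by rw [← d1d2 hc hd ha]
    _ = (c * d) * (a * b) := mul_assoc _ _ _

lemma killL {a b : ExteriorAlgebra R M} (ha : IsDeg1 a) : a * (a * b) = 0 := by
  rw [← mul_assoc, deg1_sq ha, zero_mul]

lemma killR {a b : ExteriorAlgebra R M} (ha : IsDeg1 a) (hb : IsDeg1 b) :
    b * (a * b) = 0 := by
  rw [← mul_assoc, deg1_anticomm hb ha, neg_mul, mul_assoc, deg1_sq hb, mul_zero, neg_zero]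

lemma d2sq {a b : ExteriorAlgebra R M} (ha : IsDeg1 a) (hb : IsDeg1 b) :
    (a * b) * (a * b) = 0 := by
  rw [mul_assoc, killR ha hb, mul_zero]

lemma abstract6 {A : Type*} [Ring A] (x y a b c : A) (hxa : x * a = 0) (hya : y * a = a * y)
    (hyb : y * b = 0) (hac : a * c = c * a) (hbc : b * c = c * b) (hcc : c * c = 0) :
    x * y * ((a + b + c) * (a + b + c)) = 0 := by
  have h1 : x * y * a = 0 := by rw [mul_assoc, hya, ← mul_assoc, hxa, zero_mul]
  have h2 : x * y * b = 0 := by rw [mul_assoc, hyb, mul_zero]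
  have hd : (a + b + c) * (a + b + c)
      = a * (a + b + c) + b * (a + b + c) + (c * a + c * b + c * c) := by
    noncomm_ring
  have h3 : ∀ t : A, x * y * (a * t) = 0 := fun t => by rw [← mul_assoc, h1, zero_mul]
  have h4 : ∀ t : A, x * y * (b * t) = 0 := fun t => by rw [← mul_assoc, h2, zero_mul]
  rw [hd, ← hac, ← hbc, hcc, add_zero]
  simp only [mul_add, h3, h4, add_zero, zero_add]

lemma omsplit (e f : Matrix (Fin 3) (Fin 1) (ExteriorAlgebra R M)) {i j : Fin 3}
    (hij : i ≠ j) :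
    ∃ k : Fin 3, om e f = e i 0 * f i 0 + e j 0 * f j 0 + e k 0 * f k 0 := by
  fin_cases i <;> fin_cases j <;>
      simp only [Fin.zero_eta, Fin.mk_one, Fin.reduceFinMk] <;>
    first
      | exact absurd rfl hij
      | (refine ⟨2, ?_⟩; unfold om; abel1)
      | (refine ⟨1, ?_⟩; unfold om; abel1)
      | (refine ⟨0, ?_⟩; unfold om; abel1)

lemma key (e f : Matrix (Fin 3) (Fin 1) (ExteriorAlgebra R M))
    (he : ∀ i, IsDeg1 (e i 0)) (hf : ∀ i, IsDeg1 (f i 0)) {i j : Fin 3} (hij : i ≠ j)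
    (x y : ExteriorAlgebra R M) (hx : x = e i 0 ∨ x = f i 0) (hy : y = e j 0 ∨ y = f j 0) :
    x * y * (om e f * om e f) = 0 := by
  have hyd : IsDeg1 y := by rcases hy with rfl | rfl; exacts [he j, hf j]
  have hxa : x * (e i 0 * f i 0) = 0 := by
    rcases hx with rfl | rfl; exacts [killL (he i), killR (he i) (hf i)]
  have hyb : y * (e j 0 * f j 0) = 0 := by
    rcases hy with rfl | rfl; exacts [killL (he j), killR (he j) (hf j)]
  have hya : y * (e i 0 * f i 0) = (e i 0 * f i 0) * y := d1d2 (he i) (hf i) hyd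
  obtain ⟨k, hsum⟩ := omsplit e f hij
  rw [hsum]
  exact abstract6 x y _ _ _ hxa hya hyb
    (d2comm (he i) (hf i) (he k) (hf k)) (d2comm (he j) (hf j) (he k) (hf k))
    (d2sq (he k) (hf k))

theorem stmt3 (e f : Matrix (Fin 3) (Fin 1) (ExteriorAlgebra R M))
    (he : ∀ i, IsDeg1 (e i 0)) (hf : ∀ i, IsDeg1 (f i 0)) :
    (cross e f).map (fun x => x * (om e f * om e f)) = 0 ∧
    (cross e e - cross f f).map (fun x => x * (om e f * om e f)) = 0 ∧
    (cross e e + cross f f).map (fun x => x * (om e f * om e f)) = 0 ∧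
    ∀ i j, i ≠ j → (box e * box f - box f * box e) i j * (om e f * om e f) = 0 := by
  have K : ∀ {i j : Fin 3}, i ≠ j → ∀ x y : ExteriorAlgebra R M,
      (x = e i 0 ∨ x = f i 0) → (y = e j 0 ∨ y = f j 0) →
      x * y * (om e f * om e f) = 0 := fun h x y hx hy => key e f he hf h x y hx hy
  refine ⟨?_, ?_, ?_, ?_⟩
  · ext i j
    fin_cases i <;> fin_cases j <;>
      simp only [Fin.zero_eta, Fin.mk_one, Fin.reduceFinMk, Matrix.zero_apply]
    · show (e 1 0 * f 2 0 - e 2 0 * f 1 0) * (om e f * om e f) = 0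
      rw [sub_mul, K (by decide) _ _ (Or.inl rfl) (Or.inr rfl),
        K (by decide) _ _ (Or.inl rfl) (Or.inr rfl), sub_zero]
    · show (e 2 0 * f 0 0 - e 0 0 * f 2 0) * (om e f * om e f) = 0
      rw [sub_mul, K (by decide) _ _ (Or.inl rfl) (Or.inr rfl),
        K (by decide) _ _ (Or.inl rfl) (Or.inr rfl), sub_zero]
    · show (e 0 0 * f 1 0 - e 1 0 * f 0 0) * (om e f * om e f) = 0
      rw [sub_mul, K (by decide) _ _ (Or.inl rfl) (Or.inr rfl),
        K (by decide) _ _ (Or.inl rfl) (Or.inr rfl), sub_zero]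
  · ext i j
    fin_cases i <;> fin_cases j <;>
      simp only [Fin.zero_eta, Fin.mk_one, Fin.reduceFinMk, Matrix.zero_apply]
    · show ((e 1 0 * e 2 0 - e 2 0 * e 1 0) - (f 1 0 * f 2 0 - f 2 0 * f 1 0))
          * (om e f * om e f) = 0
      rw [sub_mul, sub_mul, sub_mul, K (by decide) _ _ (Or.inl rfl) (Or.inl rfl),
        K (by decide) _ _ (Or.inl rfl) (Or.inl rfl),
        K (by decide) _ _ (Or.inr rfl) (Or.inr rfl),
        K (by decide) _ _ (Or.inr rfl) (Or.inr rfl)]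
      abel
    · show ((e 2 0 * e 0 0 - e 0 0 * e 2 0) - (f 2 0 * f 0 0 - f 0 0 * f 2 0))
          * (om e f * om e f) = 0
      rw [sub_mul, sub_mul, sub_mul, K (by decide) _ _ (Or.inl rfl) (Or.inl rfl),
        K (by decide) _ _ (Or.inl rfl) (Or.inl rfl),
        K (by decide) _ _ (Or.inr rfl) (Or.inr rfl),
        K (by decide) _ _ (Or.inr rfl) (Or.inr rfl)]
      abel
    · show ((e 0 0 * e 1 0 - e 1 0 * e 0 0) - (f 0 0 * f 1 0 - f 1 0 * f 0 0))
          * (om e f * om e f) = 0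
      rw [sub_mul, sub_mul, sub_mul, K (by decide) _ _ (Or.inl rfl) (Or.inl rfl),
        K (by decide) _ _ (Or.inl rfl) (Or.inl rfl),
        K (by decide) _ _ (Or.inr rfl) (Or.inr rfl),
        K (by decide) _ _ (Or.inr rfl) (Or.inr rfl)]
      abel
  · ext i j
    fin_cases i <;> fin_cases j <;>
      simp only [Fin.zero_eta, Fin.mk_one, Fin.reduceFinMk, Matrix.zero_apply]
    · show ((e 1 0 * e 2 0 - e 2 0 * e 1 0) + (f 1 0 * f 2 0 - f 2 0 * f 1 0))
          * (om e f * om e f) = 0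
      rw [add_mul, sub_mul, sub_mul, K (by decide) _ _ (Or.inl rfl) (Or.inl rfl),
        K (by decide) _ _ (Or.inl rfl) (Or.inl rfl),
        K (by decide) _ _ (Or.inr rfl) (Or.inr rfl),
        K (by decide) _ _ (Or.inr rfl) (Or.inr rfl)]
      abel
    · show ((e 2 0 * e 0 0 - e 0 0 * e 2 0) + (f 2 0 * f 0 0 - f 0 0 * f 2 0))
          * (om e f * om e f) = 0
      rw [add_mul, sub_mul, sub_mul, K (by decide) _ _ (Or.inl rfl) (Or.inl rfl),
        K (by decide) _ _ (Or.inl rfl) (Or.inl rfl),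
        K (by decide) _ _ (Or.inr rfl) (Or.inr rfl),
        K (by decide) _ _ (Or.inr rfl) (Or.inr rfl)]
      abel
    · show ((e 0 0 * e 1 0 - e 1 0 * e 0 0) + (f 0 0 * f 1 0 - f 1 0 * f 0 0))
          * (om e f * om e f) = 0
      rw [add_mul, sub_mul, sub_mul, K (by decide) _ _ (Or.inl rfl) (Or.inl rfl),
        K (by decide) _ _ (Or.inl rfl) (Or.inl rfl),
        K (by decide) _ _ (Or.inr rfl) (Or.inr rfl),
        K (by decide) _ _ (Or.inr rfl) (Or.inr rfl)]
      abel
  · intro i j hij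
    fin_cases i <;> fin_cases j <;>
      simp only [Fin.zero_eta, Fin.mk_one, Fin.reduceFinMk] at hij ⊢ <;>
      [skip; skip; skip; skip; skip; skip; skip; skip; skip] <;>
      first
        | exact absurd rfl hij
        | (rw [Matrix.sub_apply, Matrix.mul_apply, Matrix.mul_apply, Fin.sum_univ_three,
            Fin.sum_univ_three]
           simp only [box, Matrix.of_apply, Matrix.cons_val_zero, Matrix.cons_val_one,
             Matrix.cons_val_two, Matrix.head_cons, Matrix.tail_cons, Matrix.cons_val',
             Matrix.empty_val', Matrix.cons_val_fin_one, Matrix.head_fin_const,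
             zero_mul, mul_zero, neg_mul, mul_neg, neg_neg, neg_zero,
             zero_add, add_zero, zero_sub, sub_zero, sub_neg_eq_add]
           rw [sub_mul, K (by decide) _ _ (Or.inl rfl) (Or.inr rfl),
             K (by decide) _ _ (Or.inr rfl) (Or.inl rfl), sub_zero])

end
end

section
/- For every δ ∈ R, (B + δC)∧(B + δC) = (1−δ)·Q₋^δ + (1+δ)·Q₊^δ + δ²·Q₀. -/
open Matrix

noncomputable section

variable {R : Type*} [CommRing R] {M : Type*} [AddCommGroup M] [Module R M]

set_option maxHeartbeats 2000000 in
theorem stmt10 [Algebra ℚ R] (e f : Matrix (Fin 3) (Fin 1) (ExteriorAlgebra R M))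
    (e0 : ExteriorAlgebra R M)
    (he : ∀ i, IsDeg1 (e i 0)) (hf : ∀ i, IsDeg1 (f i 0)) (he0 : IsDeg1 e0) :
    ∀ δ : R,
      (Bmat e f e0 + δ • Cmat e f e0) * (Bmat e f e0 + δ • Cmat e f e0)
        = (1 - δ) • Qminus e f e0 δ + (1 + δ) • Qplus e f δ
          + (δ ^ 2) • Qzero e f := by

  have sq : ∀ x : ExteriorAlgebra R M, IsDeg1 x → x * x = 0 := by
    rintro x ⟨m, rfl⟩; exact ExteriorAlgebra.ι_sq_zero m
  have sw : ∀ x y : ExteriorAlgebra R M, IsDeg1 x → IsDeg1 y → y * x = -(x * y) := by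
    rintro x y ⟨m, rfl⟩ ⟨n, rfl⟩
    exact eq_neg_of_add_eq_zero_left (ExteriorAlgebra.ι_add_mul_swap n m)
  intro δ
  have hE : ∀ i, e i 0 * e i 0 = 0 := fun i => sq _ (he i)
  have hF : ∀ i, f i 0 * f i 0 = 0 := fun i => sq _ (hf i)
  have h00 : e0 * e0 = 0 := sq _ he0
  have sE0 : ∀ i, e i 0 * e0 = -(e0 * e i 0) := fun i => sw _ _ he0 (he i)
  have sF0 : ∀ i, f i 0 * e0 = -(e0 * f i 0) := fun i => sw _ _ he0 (hf i)
  have sFE : ∀ i j, f i 0 * e j 0 = -(e j 0 * f i 0) := fun i j => sw _ _ (he j) (hf i)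
  have sE10 : e 1 0 * e 0 0 = -(e 0 0 * e 1 0) := sw _ _ (he 0) (he 1)
  have sE20 : e 2 0 * e 0 0 = -(e 0 0 * e 2 0) := sw _ _ (he 0) (he 2)
  have sE21 : e 2 0 * e 1 0 = -(e 1 0 * e 2 0) := sw _ _ (he 1) (he 2)
  have sF10 : f 1 0 * f 0 0 = -(f 0 0 * f 1 0) := sw _ _ (hf 0) (hf 1)
  have sF20 : f 2 0 * f 0 0 = -(f 0 0 * f 2 0) := sw _ _ (hf 0) (hf 2)
  have sF21 : f 2 0 * f 1 0 = -(f 1 0 * f 2 0) := sw _ _ (hf 1) (hf 2)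
  have hc : algebraMap ℚ R (1/2) * 2 = 1 := by
    rw [show (2:R) = algebraMap ℚ R 2 from (map_ofNat (algebraMap ℚ R) 2).symm, ← _root_.map_mul]; norm_num
  ext i j
  obtain i | i | i := i <;> obtain j | j | j := j <;> fin_cases i <;> fin_cases j <;>
    · simp only [Bmat, Cmat, Qminus, Qplus, Qzero, blk, dg, box, cross, Matrix.mul_apply,
        Fintype.sum_sum_type, Fin.sum_univ_three, Finset.univ_unique, Finset.sum_singleton,
        Matrix.fromBlocks_apply₁₁, Matrix.fromBlocks_apply₁₂,
        Matrix.fromBlocks_apply₂₁, Matrix.fromBlocks_apply₂₂,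
        Matrix.fromRows_apply_inl, Matrix.fromRows_apply_inr,
        Matrix.fromCols_apply_inl, Matrix.fromCols_apply_inr,
        Matrix.add_apply, Matrix.smul_apply, Matrix.neg_apply, Matrix.map_apply,
        Matrix.zero_apply, Matrix.transpose_apply, Matrix.of_apply, Matrix.cons_val',
        Matrix.cons_val_zero, Matrix.cons_val_one, Matrix.head_cons, Matrix.head_fin_const,
        Matrix.cons_val_fin_one, Matrix.diagonal_apply_eq, Matrix.diagonal_apply_ne,
        Matrix.sub_apply, Fin.isValue, Matrix.diagonal, Matrix.cons_val_two, Matrix.tail_cons,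
        Fin.zero_eta, Fin.mk_one, Fin.reduceFinMk, Fin.reduceEq, Fin.default_eq_zero,
        reduceIte, ite_true, ite_false, Matrix.cons_val_one, Matrix.head_cons]
      simp only [smul_mul_assoc, mul_smul_comm, smul_smul, mul_zero, zero_mul, mul_one, one_mul, mul_neg, neg_mul, smul_zero,
        zero_add, add_zero, neg_zero, neg_neg, smul_neg, mul_add, add_mul, mul_sub,
        sub_mul, smul_add, smul_sub, hE, hF, h00, sE0, sF0, sFE, sE10, sE20, sE21,
        sF10, sF20, sF21]
      try first
        | module
        | (match_scalars <;>
            first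
              | ring1
              | linear_combination (δ^2) * hc
              | linear_combination (-(δ^2)) * hc
              | linear_combination (2*δ^2) * hc
              | linear_combination (-(2*δ^2)) * hc)


end
end

section
/- For every δ ∈ R: tr(F_A∧Q₋^δ + Q₋^δ∧F_A) = 0 and tr(F_A∧Q₊^δ + Q₊^δ∧F_A) = 0. -/
open Matrix

noncomputable section

variable {R : Type*} [CommRing R] {M : Type*} [AddCommGroup M] [Module R M]

lemma deg2_comm_deg1 {x y : ExteriorAlgebra R M} (hx : IsDeg2 x) (hy : IsDeg1 y) :
    y * x = x * y := by
  rw [IsDeg2, sq] at hx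
  refine Submodule.mul_induction_on (C := fun z => y * z = z * y) hx ?_ ?_
  · rintro a ha b hb
    obtain ⟨m, rfl⟩ := ha
    obtain ⟨n, rfl⟩ := hb
    obtain ⟨p, rfl⟩ := hy
    have h1 := deg1_anticomm (R := R) ⟨p, rfl⟩ ⟨m, rfl⟩
    have h2 := deg1_anticomm (R := R) ⟨p, rfl⟩ ⟨n, rfl⟩
    calc ExteriorAlgebra.ι R p * (ExteriorAlgebra.ι R m * ExteriorAlgebra.ι R n)
        = (ExteriorAlgebra.ι R p * ExteriorAlgebra.ι R m) * ExteriorAlgebra.ι R n := by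
          rw [mul_assoc]
      _ = -(ExteriorAlgebra.ι R m * (ExteriorAlgebra.ι R p * ExteriorAlgebra.ι R n)) := by
          rw [h1]; noncomm_ring
      _ = ExteriorAlgebra.ι R m * ExteriorAlgebra.ι R n * ExteriorAlgebra.ι R p := by
          rw [h2]; noncomm_ring
  · intro a b h1 h2; rw [mul_add, add_mul, h1, h2]

lemma swap_triple {A : Type*} [Ring A] {x y : A} (h : x * y = -(y * x)) (z : A) :
    x * (y * z) = -(y * (x * z)) := by rw [← mul_assoc, h, neg_mul, mul_assoc]

lemma comm_triple {A : Type*} [Ring A] {x y : A} (h : x * y = y * x) (z : A) :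
    x * (y * z) = y * (x * z) := by rw [← mul_assoc, h, mul_assoc]


set_option maxHeartbeats 2000000 in
theorem stmt14 [Algebra ℚ R] (e f : Matrix (Fin 3) (Fin 1) (ExteriorAlgebra R M))
    (e0 : ExteriorAlgebra R M)
    (he : ∀ i, IsDeg1 (e i 0)) (hf : ∀ i, IsDeg1 (f i 0)) (he0 : IsDeg1 e0)
    (α β : Matrix (Fin 3) (Fin 3) (ExteriorAlgebra R M))
    (hα : ∀ i j, IsDeg2 (α i j)) (hβ : ∀ i j, IsDeg2 (β i j))
    (hαt : αᵀ = -α) (hβt : βᵀ = β) (hβtr : Matrix.trace β = 0)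
    (h1 : α * e + β * f = 0) (h2 : α * f - β * e = 0) :
    ∀ δ : R,
      Matrix.trace (FA α β * Qminus e f e0 δ + Qminus e f e0 δ * FA α β) = 0 ∧
      Matrix.trace (FA α β * Qplus e f δ + Qplus e f δ * FA α β) = 0 := by
  intro δ
  constructor
  · simp only [FA, Qminus, blk, dg, box, Matrix.trace, Matrix.diag, Matrix.add_apply,
      Matrix.mul_apply, Fintype.sum_sum_type, Fin.sum_univ_three, Fin.sum_univ_one,
      Matrix.fromBlocks_apply₁₁, Matrix.fromBlocks_apply₁₂, Matrix.fromBlocks_apply₂₁,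
      Matrix.fromBlocks_apply₂₂, Matrix.fromRows, Matrix.fromCols, Sum.elim, Matrix.map_apply,
      Matrix.smul_apply, Matrix.neg_apply, Matrix.zero_apply, Sum.elim_inl, Sum.elim_inr,
      Matrix.of_apply, Matrix.cons_val', Matrix.cons_val_zero, Matrix.cons_val_one,
      Matrix.head_cons, Matrix.empty_val', Matrix.cons_val_fin_one, Matrix.head_fin_const,
      Matrix.cons_val_two, Matrix.tail_cons,
      Matrix.transpose_apply, mul_zero, zero_mul, add_zero, zero_add, mul_neg, neg_mul,
      smul_mul_assoc, mul_smul_comm, Matrix.smul_mul, Matrix.mul_smul]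
    module
  · simp only [FA, Qplus, blk, cross, Matrix.trace, Matrix.diag, Matrix.add_apply,
      Matrix.mul_apply, Fintype.sum_sum_type, Fin.sum_univ_three, Fin.sum_univ_one,
      Matrix.fromBlocks_apply₁₁, Matrix.fromBlocks_apply₁₂, Matrix.fromBlocks_apply₂₁,
      Matrix.fromBlocks_apply₂₂, Matrix.fromRows, Matrix.fromCols, Sum.elim, Matrix.map_apply,
      Matrix.smul_apply, Matrix.neg_apply, Matrix.zero_apply, Sum.elim_inl, Sum.elim_inr,
      Matrix.of_apply, Matrix.cons_val', Matrix.cons_val_zero, Matrix.cons_val_one,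
      Matrix.head_cons, Matrix.empty_val', Matrix.cons_val_fin_one, Matrix.head_fin_const,
      Matrix.cons_val_two, Matrix.tail_cons, Matrix.sub_apply,
      Matrix.transpose_apply, mul_zero, zero_mul, add_zero, zero_add, mul_neg, neg_mul,
      smul_mul_assoc, mul_smul_comm, Matrix.smul_mul, Matrix.mul_smul,
      smul_zero, neg_zero, add_zero, zero_add]
    -- basic anticommutation and commutation facts
    have aff : ∀ k l : Fin 3, f k 0 * f l 0 = -(f l 0 * f k 0) :=
      fun k l => deg1_anticomm (hf k) (hf l)
    have aee : ∀ k l : Fin 3, e k 0 * e l 0 = -(e l 0 * e k 0) :=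
      fun k l => deg1_anticomm (he k) (he l)
    have afe : ∀ k l : Fin 3, f k 0 * e l 0 = -(e l 0 * f k 0) :=
      fun k l => deg1_anticomm (hf k) (he l)
    have cαe : ∀ i j k : Fin 3, e k 0 * α i j = α i j * e k 0 :=
      fun i j k => deg2_comm_deg1 (hα i j) (he k)
    have cαf : ∀ i j k : Fin 3, f k 0 * α i j = α i j * f k 0 :=
      fun i j k => deg2_comm_deg1 (hα i j) (hf k)
    have cβe : ∀ i j k : Fin 3, e k 0 * β i j = β i j * e k 0 :=
      fun i j k => deg2_comm_deg1 (hβ i j) (he k)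
    have cβf : ∀ i j k : Fin 3, f k 0 * β i j = β i j * f k 0 :=
      fun i j k => deg2_comm_deg1 (hβ i j) (hf k)
    -- move α, β to the left
    have mv1 : ∀ (i j k l : Fin 3), f k 0 * f l 0 * α i j = α i j * (f k 0 * f l 0) := by
      intro i j k l; rw [mul_assoc, cαf, ← mul_assoc, cαf, mul_assoc]
    have mv2 : ∀ (i j k l : Fin 3), e k 0 * e l 0 * α i j = α i j * (e k 0 * e l 0) := by
      intro i j k l; rw [mul_assoc, cαe, ← mul_assoc, cαe, mul_assoc]
    have mv3 : ∀ (i j k l : Fin 3), f k 0 * e l 0 * β i j = β i j * (f k 0 * e l 0) := by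
      intro i j k l; rw [mul_assoc, cβe, ← mul_assoc, cβf, mul_assoc]
    have mv4 : ∀ (i j k l : Fin 3), e k 0 * f l 0 * β i j = β i j * (e k 0 * f l 0) := by
      intro i j k l; rw [mul_assoc, cβf, ← mul_assoc, cβe, mul_assoc]
    have mv5 : ∀ (i j k : Fin 3) (x : ExteriorAlgebra R M),
        e k 0 * (α i j * x) = α i j * (e k 0 * x) := fun i j k x => comm_triple (cαe i j k) x
    have mv6 : ∀ (i j k : Fin 3) (x : ExteriorAlgebra R M),
        f k 0 * (α i j * x) = α i j * (f k 0 * x) := fun i j k x => comm_triple (cαf i j k) x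
    have mv7 : ∀ (i j k : Fin 3) (x : ExteriorAlgebra R M),
        e k 0 * (β i j * x) = β i j * (e k 0 * x) := fun i j k x => comm_triple (cβe i j k) x
    have mv8 : ∀ (i j k : Fin 3) (x : ExteriorAlgebra R M),
        f k 0 * (β i j * x) = β i j * (f k 0 * x) := fun i j k x => comm_triple (cβf i j k) x
    -- sorting of degree-1 pairs
    have sqe : ∀ i : Fin 3, e i 0 * e i 0 = 0 := fun i => deg1_sq (he i)
    have sqf : ∀ i : Fin 3, f i 0 * f i 0 = 0 := fun i => deg1_sq (hf i)
    have s1 : f 1 0 * f 0 0 = -(f 0 0 * f 1 0) := aff 1 0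
    have s2 : f 2 0 * f 0 0 = -(f 0 0 * f 2 0) := aff 2 0
    have s3 : f 2 0 * f 1 0 = -(f 1 0 * f 2 0) := aff 2 1
    have s4 : e 1 0 * e 0 0 = -(e 0 0 * e 1 0) := aee 1 0
    have s5 : e 2 0 * e 0 0 = -(e 0 0 * e 2 0) := aee 2 0
    have s6 : e 2 0 * e 1 0 = -(e 1 0 * e 2 0) := aee 2 1
    -- component equations
    have hc1 : ∀ i : Fin 3, α i 0 * e 0 0 + α i 1 * e 1 0 + α i 2 * e 2 0 +
        (β i 0 * f 0 0 + β i 1 * f 1 0 + β i 2 * f 2 0) = 0 := by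
      intro i
      have h := congrFun (congrFun h1 i) 0
      simpa [Matrix.add_apply, Matrix.mul_apply, Fin.sum_univ_three, Matrix.zero_apply] using h
    have hc2 : ∀ i : Fin 3, α i 0 * f 0 0 + α i 1 * f 1 0 + α i 2 * f 2 0 -
        (β i 0 * e 0 0 + β i 1 * e 1 0 + β i 2 * e 2 0) = 0 := by
      intro i
      have h := congrFun (congrFun h2 i) 0
      simpa [Matrix.sub_apply, Matrix.mul_apply, Fin.sum_univ_three, Matrix.zero_apply] using h
    have hZ : e 0 0 * (α 0 0 * e 0 0 + α 0 1 * e 1 0 + α 0 2 * e 2 0 +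
          (β 0 0 * f 0 0 + β 0 1 * f 1 0 + β 0 2 * f 2 0)) +
        e 1 0 * (α 1 0 * e 0 0 + α 1 1 * e 1 0 + α 1 2 * e 2 0 +
          (β 1 0 * f 0 0 + β 1 1 * f 1 0 + β 1 2 * f 2 0)) +
        e 2 0 * (α 2 0 * e 0 0 + α 2 1 * e 1 0 + α 2 2 * e 2 0 +
          (β 2 0 * f 0 0 + β 2 1 * f 1 0 + β 2 2 * f 2 0)) +
        (f 0 0 * (α 0 0 * f 0 0 + α 0 1 * f 1 0 + α 0 2 * f 2 0 -
          (β 0 0 * e 0 0 + β 0 1 * e 1 0 + β 0 2 * e 2 0)) +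
        f 1 0 * (α 1 0 * f 0 0 + α 1 1 * f 1 0 + α 1 2 * f 2 0 -
          (β 1 0 * e 0 0 + β 1 1 * e 1 0 + β 1 2 * e 2 0)) +
        f 2 0 * (α 2 0 * f 0 0 + α 2 1 * f 1 0 + α 2 2 * f 2 0 -
          (β 2 0 * e 0 0 + β 2 1 * e 1 0 + β 2 2 * e 2 0))) = 0 := by
      rw [hc1 0, hc1 1, hc1 2, hc2 0, hc2 1, hc2 2]
      simp
    simp only [mul_add, mul_sub, mul_neg, neg_mul, neg_neg, mv1, mv2, mv3, mv4, mv5, mv6,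
      mv7, mv8, s1, s2, s3, s4, s5, s6, afe, sqe, sqf, mul_zero, zero_mul, smul_zero,
      neg_zero, add_zero, zero_add] at hZ ⊢
    conv_rhs => rw [← smul_zero (2 * (1 + δ) : R), ← hZ]
    module

end
end

section
/- tr(F_A∧Q₀ + Q₀∧F_A) = 0. -/
open Matrix

noncomputable section

variable {R : Type*} [CommRing R] {M : Type*} [AddCommGroup M] [Module R M]

lemma deg1_comm_deg2 {x y : ExteriorAlgebra R M} (hx : IsDeg1 x) (hy : IsDeg2 y) :
    x * y = y * x := by
  rw [IsDeg2, pow_two] at hy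
  refine Submodule.mul_induction_on hy ?_ ?_
  · rintro a ⟨p, rfl⟩ b ⟨q, rfl⟩
    have h1 := deg1_anticomm hx ⟨p, rfl⟩
    have h2 := deg1_anticomm hx ⟨q, rfl⟩
    rw [← mul_assoc, h1, neg_mul, mul_assoc, h2, mul_neg, neg_neg, ← mul_assoc]
  · intro a b ha hb
    rw [mul_add, add_mul, ha, hb]

lemma pair_comm_deg2 {x y z : ExteriorAlgebra R M} (hx : IsDeg1 x) (hy : IsDeg1 y)
    (hz : IsDeg2 z) : x * y * z = z * (x * y) := by
  rw [mul_assoc, deg1_comm_deg2 hy hz, ← mul_assoc, deg1_comm_deg2 hx hz, mul_assoc]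

set_option maxHeartbeats 4000000 in
theorem stmt15 [Algebra ℚ R] (e f : Matrix (Fin 3) (Fin 1) (ExteriorAlgebra R M))
    (he : ∀ i, IsDeg1 (e i 0)) (hf : ∀ i, IsDeg1 (f i 0))
    (α β : Matrix (Fin 3) (Fin 3) (ExteriorAlgebra R M))
    (hα : ∀ i j, IsDeg2 (α i j)) (hβ : ∀ i j, IsDeg2 (β i j))
    (hαt : αᵀ = -α) (hβt : βᵀ = β) (hβtr : Matrix.trace β = 0)
    (h1 : α * e + β * f = 0) (h2 : α * f - β * e = 0) :
    Matrix.trace (FA α β * Qzero e f + Qzero e f * FA α β) = 0 := by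
  classical
  -- pull out the scalar 1/2
  rw [Qzero, Matrix.mul_smul, Matrix.smul_mul, ← smul_add, Matrix.trace_smul]
  rw [show Matrix.trace (FA α β *
      (blk 0 0 0
      0 (-(box (cross e e + cross f f))) (-((2 : R) • (box e * box f - box f * box e)))
      0 ((2 : R) • (box e * box f - box f * box e)) (-(box (cross e e + cross f f)))) +
      (blk 0 0 0
      0 (-(box (cross e e + cross f f))) (-((2 : R) • (box e * box f - box f * box e)))
      0 ((2 : R) • (box e * box f - box f * box e)) (-(box (cross e e + cross f f)))) * FA α β) = 0
    from ?_, smul_zero]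
  -- commutation facts
  have hAee : ∀ (a b i j : Fin 3), e a 0 * e b 0 * α i j = α i j * (e a 0 * e b 0) :=
    fun a b i j => pair_comm_deg2 (he a) (he b) (hα i j)
  have hAef : ∀ (a b i j : Fin 3), e a 0 * f b 0 * α i j = α i j * (e a 0 * f b 0) :=
    fun a b i j => pair_comm_deg2 (he a) (hf b) (hα i j)
  have hAfe : ∀ (a b i j : Fin 3), f a 0 * e b 0 * α i j = α i j * (f a 0 * e b 0) :=
    fun a b i j => pair_comm_deg2 (hf a) (he b) (hα i j)
  have hAff : ∀ (a b i j : Fin 3), f a 0 * f b 0 * α i j = α i j * (f a 0 * f b 0) :=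
    fun a b i j => pair_comm_deg2 (hf a) (hf b) (hα i j)
  have hBee : ∀ (a b i j : Fin 3), e a 0 * e b 0 * β i j = β i j * (e a 0 * e b 0) :=
    fun a b i j => pair_comm_deg2 (he a) (he b) (hβ i j)
  have hBef : ∀ (a b i j : Fin 3), e a 0 * f b 0 * β i j = β i j * (e a 0 * f b 0) :=
    fun a b i j => pair_comm_deg2 (he a) (hf b) (hβ i j)
  have hBfe : ∀ (a b i j : Fin 3), f a 0 * e b 0 * β i j = β i j * (f a 0 * e b 0) :=
    fun a b i j => pair_comm_deg2 (hf a) (he b) (hβ i j)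
  have hBff : ∀ (a b i j : Fin 3), f a 0 * f b 0 * β i j = β i j * (f a 0 * f b 0) :=
    fun a b i j => pair_comm_deg2 (hf a) (hf b) (hβ i j)
  have hAe : ∀ (a i j b : Fin 3), e a 0 * (α i j * e b 0) = α i j * (e a 0 * e b 0) := by
    intro a i j b
    rw [← mul_assoc, deg1_comm_deg2 (he a) (hα i j), mul_assoc]
  have hBf : ∀ (a i j b : Fin 3), e a 0 * (β i j * f b 0) = β i j * (e a 0 * f b 0) := by
    intro a i j b
    rw [← mul_assoc, deg1_comm_deg2 (he a) (hβ i j), mul_assoc]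
  have hAf : ∀ (a i j b : Fin 3), f a 0 * (α i j * f b 0) = α i j * (f a 0 * f b 0) := by
    intro a i j b
    rw [← mul_assoc, deg1_comm_deg2 (hf a) (hα i j), mul_assoc]
  have hBe : ∀ (a i j b : Fin 3), f a 0 * (β i j * e b 0) = β i j * (f a 0 * e b 0) := by
    intro a i j b
    rw [← mul_assoc, deg1_comm_deg2 (hf a) (hβ i j), mul_assoc]
  -- anticommutation / reordering facts
  have se : ∀ a : Fin 3, e a 0 * e a 0 = 0 := fun a => deg1_sq (he a)
  have sf : ∀ a : Fin 3, f a 0 * f a 0 = 0 := fun a => deg1_sq (hf a)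
  have s10 : e 1 0 * e 0 0 = -(e 0 0 * e 1 0) := deg1_anticomm (he 1) (he 0)
  have s20 : e 2 0 * e 0 0 = -(e 0 0 * e 2 0) := deg1_anticomm (he 2) (he 0)
  have s21 : e 2 0 * e 1 0 = -(e 1 0 * e 2 0) := deg1_anticomm (he 2) (he 1)
  have t10 : f 1 0 * f 0 0 = -(f 0 0 * f 1 0) := deg1_anticomm (hf 1) (hf 0)
  have t20 : f 2 0 * f 0 0 = -(f 0 0 * f 2 0) := deg1_anticomm (hf 2) (hf 0)
  have t21 : f 2 0 * f 1 0 = -(f 1 0 * f 2 0) := deg1_anticomm (hf 2) (hf 1)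
  have u : ∀ a b : Fin 3, f a 0 * e b 0 = -(e b 0 * f a 0) :=
    fun a b => deg1_anticomm (hf a) (he b)
  -- symmetry facts for α, β
  have a10 : α 1 0 = -(α 0 1) := by have := congrFun (congrFun hαt 0) 1; simpa using this
  have a20 : α 2 0 = -(α 0 2) := by have := congrFun (congrFun hαt 0) 2; simpa using this
  have a21 : α 2 1 = -(α 1 2) := by have := congrFun (congrFun hαt 1) 2; simpa using this
  have b10 : β 1 0 = β 0 1 := by have := congrFun (congrFun hβt 0) 1; simpa using this
  have b20 : β 2 0 = β 0 2 := by have := congrFun (congrFun hβt 0) 2; simpa using this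
  have b21 : β 2 1 = β 1 2 := by have := congrFun (congrFun hβt 1) 2; simpa using this
  have b22 : β 2 2 = -(β 0 0) - β 1 1 := by
    have := hβtr
    rw [Matrix.trace, Fin.sum_univ_three] at this
    simp only [Matrix.diag] at this
    linear_combination (norm := abel1) this
  -- row equations from h1, h2
  have r0 := congrFun (congrFun h1 0) 0
  have r1 := congrFun (congrFun h1 1) 0
  have r2 := congrFun (congrFun h1 2) 0
  have q0 := congrFun (congrFun h2 0) 0
  have q1 := congrFun (congrFun h2 1) 0
  have q2 := congrFun (congrFun h2 2) 0
  simp only [Matrix.add_apply, Matrix.sub_apply, Matrix.mul_apply, Fin.sum_univ_three,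
    Matrix.zero_apply] at r0 r1 r2 q0 q1 q2
  have He0 := congrArg (fun z => e 0 0 * z) r0
  have He1 := congrArg (fun z => e 1 0 * z) r1
  have He2 := congrArg (fun z => e 2 0 * z) r2
  have Hf0 := congrArg (fun z => f 0 0 * z) q0
  have Hf1 := congrArg (fun z => f 1 0 * z) q1
  have Hf2 := congrArg (fun z => f 2 0 * z) q2
  simp only [mul_add, mul_sub, add_mul, sub_mul, mul_zero, zero_mul, hAe, hBf, hAf, hBe,
    se, sf, s10, s20, s21,
    t10, t20, t21, u, a10, a20, a21, b10, b20, b21, b22, mul_neg, neg_mul, neg_neg,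
    add_zero, zero_add, sub_eq_add_neg, neg_add_rev] at He0 He1 He2 Hf0 Hf1 Hf2
  -- expand the trace
  simp only [FA, blk, box, cross, Matrix.trace, Matrix.diag, Fintype.sum_sum_type,
    Fin.sum_univ_three, Fin.sum_univ_one, Fin.isValue, Matrix.mul_apply, Matrix.fromBlocks_apply₁₁,
    Matrix.fromBlocks_apply₁₂, Matrix.fromBlocks_apply₂₁, Matrix.fromBlocks_apply₂₂,
    Matrix.fromCols, Matrix.fromRows, Matrix.zero_apply, Matrix.neg_apply,
    Matrix.smul_apply, Matrix.add_apply, Matrix.sub_apply, Matrix.of_apply,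
    Matrix.cons_val', Matrix.cons_val_zero, Matrix.cons_val_one, Matrix.cons_val_two,
    Matrix.head_cons, Matrix.tail_cons, Matrix.vecHead, Sum.elim_inl, Sum.elim_inr, Pi.zero_apply,
    Matrix.empty_val', Matrix.cons_val_fin_one,
    zero_mul, mul_zero, add_zero, zero_add, smul_eq_mul]
  simp only [two_smul, mul_add, add_mul, mul_sub, sub_mul, mul_neg, neg_mul, neg_neg,
    mul_zero, zero_mul, add_zero, zero_add, sub_eq_add_neg, neg_add_rev,
    hAee, hAef, hAfe, hAff, hBee, hBef, hBfe, hBff,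
    se, sf, s10, s20, s21, t10, t20, t21, u, a10, a20, a21, b10, b20, b21, b22]
  linear_combination (norm := abel1) (8:ℤ) • He0 + (8:ℤ) • He1 + (8:ℤ) • He2 +
    (8:ℤ) • Hf0 + (8:ℤ) • Hf1 + (8:ℤ) • Hf2

end
end

section
/- For every δ ∈ R: tr(Q₋^δ∧Q₊^δ + Q₊^δ∧Q₋^δ) = 0, tr(Q₋^δ∧Q₀ + Q₀∧Q₋^δ) = 0, and tr(Q₊^δ∧Q₀ + Q₀∧Q₊^δ) = 16(1+δ)·ω∧ω. -/
open Matrix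

noncomputable section

variable {R : Type*} [CommRing R] {M : Type*} [AddCommGroup M] [Module R M]

set_option maxHeartbeats 4000000 in
theorem stmt17 [Algebra ℚ R] (e f : Matrix (Fin 3) (Fin 1) (ExteriorAlgebra R M))
    (e0 : ExteriorAlgebra R M)
    (he : ∀ i, IsDeg1 (e i 0)) (hf : ∀ i, IsDeg1 (f i 0)) (he0 : IsDeg1 e0) :
    ∀ δ : R,
      Matrix.trace (Qminus e f e0 δ * Qplus e f δ + Qplus e f δ * Qminus e f e0 δ) = 0 ∧
      Matrix.trace (Qminus e f e0 δ * Qzero e f + Qzero e f * Qminus e f e0 δ) = 0 ∧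
      Matrix.trace (Qplus e f δ * Qzero e f + Qzero e f * Qplus e f δ)
        = (16 * (1 + δ)) • (om e f * om e f) := by
  intro δ
  have anti : ∀ x y : ExteriorAlgebra R M, IsDeg1 x → IsDeg1 y → y * x = -(x * y) := by
    rintro _ _ ⟨m, rfl⟩ ⟨n, rfl⟩
    rw [eq_neg_iff_add_eq_zero, add_comm]
    exact ExteriorAlgebra.ι_add_mul_swap m n
  have sq : ∀ x : ExteriorAlgebra R M, IsDeg1 x → x * x = 0 := by
    rintro _ ⟨m, rfl⟩; exact ExteriorAlgebra.ι_sq_zero m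
  have swap' : ∀ x y : ExteriorAlgebra R M, y * x = -(x * y) →
      ∀ u, y * (x * u) = -(x * (y * u)) := by
    intro x y h u; rw [← mul_assoc, h, neg_mul, mul_assoc]
  have sqn : ∀ x : ExteriorAlgebra R M, x * x = 0 → ∀ u, x * (x * u) = 0 := by
    intro x h u; rw [← mul_assoc, h, zero_mul]
  have s0 : (e0) * (e0) = 0 := sq _ (he0)
  have t0 : ∀ u, (e0) * ((e0) * u) = 0 := sqn _ s0
  have s1 : (e 0 0) * (e 0 0) = 0 := sq _ (he 0)
  have t1 : ∀ u, (e 0 0) * ((e 0 0) * u) = 0 := sqn _ s1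
  have s2 : (e 1 0) * (e 1 0) = 0 := sq _ (he 1)
  have t2 : ∀ u, (e 1 0) * ((e 1 0) * u) = 0 := sqn _ s2
  have s3 : (e 2 0) * (e 2 0) = 0 := sq _ (he 2)
  have t3 : ∀ u, (e 2 0) * ((e 2 0) * u) = 0 := sqn _ s3
  have s4 : (f 0 0) * (f 0 0) = 0 := sq _ (hf 0)
  have t4 : ∀ u, (f 0 0) * ((f 0 0) * u) = 0 := sqn _ s4
  have s5 : (f 1 0) * (f 1 0) = 0 := sq _ (hf 1)
  have t5 : ∀ u, (f 1 0) * ((f 1 0) * u) = 0 := sqn _ s5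
  have s6 : (f 2 0) * (f 2 0) = 0 := sq _ (hf 2)
  have t6 : ∀ u, (f 2 0) * ((f 2 0) * u) = 0 := sqn _ s6
  have h01 : (e 0 0) * (e0) = -((e0) * (e 0 0)) := anti _ _ (he0) (he 0)
  have n01 : ∀ u, (e 0 0) * ((e0) * u) = -((e0) * ((e 0 0) * u)) := swap' _ _ h01
  have h02 : (e 1 0) * (e0) = -((e0) * (e 1 0)) := anti _ _ (he0) (he 1)
  have n02 : ∀ u, (e 1 0) * ((e0) * u) = -((e0) * ((e 1 0) * u)) := swap' _ _ h02
  have h03 : (e 2 0) * (e0) = -((e0) * (e 2 0)) := anti _ _ (he0) (he 2)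
  have n03 : ∀ u, (e 2 0) * ((e0) * u) = -((e0) * ((e 2 0) * u)) := swap' _ _ h03
  have h04 : (f 0 0) * (e0) = -((e0) * (f 0 0)) := anti _ _ (he0) (hf 0)
  have n04 : ∀ u, (f 0 0) * ((e0) * u) = -((e0) * ((f 0 0) * u)) := swap' _ _ h04
  have h05 : (f 1 0) * (e0) = -((e0) * (f 1 0)) := anti _ _ (he0) (hf 1)
  have n05 : ∀ u, (f 1 0) * ((e0) * u) = -((e0) * ((f 1 0) * u)) := swap' _ _ h05
  have h06 : (f 2 0) * (e0) = -((e0) * (f 2 0)) := anti _ _ (he0) (hf 2)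
  have n06 : ∀ u, (f 2 0) * ((e0) * u) = -((e0) * ((f 2 0) * u)) := swap' _ _ h06
  have h12 : (e 1 0) * (e 0 0) = -((e 0 0) * (e 1 0)) := anti _ _ (he 0) (he 1)
  have n12 : ∀ u, (e 1 0) * ((e 0 0) * u) = -((e 0 0) * ((e 1 0) * u)) := swap' _ _ h12
  have h13 : (e 2 0) * (e 0 0) = -((e 0 0) * (e 2 0)) := anti _ _ (he 0) (he 2)
  have n13 : ∀ u, (e 2 0) * ((e 0 0) * u) = -((e 0 0) * ((e 2 0) * u)) := swap' _ _ h13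
  have h14 : (f 0 0) * (e 0 0) = -((e 0 0) * (f 0 0)) := anti _ _ (he 0) (hf 0)
  have n14 : ∀ u, (f 0 0) * ((e 0 0) * u) = -((e 0 0) * ((f 0 0) * u)) := swap' _ _ h14
  have h15 : (f 1 0) * (e 0 0) = -((e 0 0) * (f 1 0)) := anti _ _ (he 0) (hf 1)
  have n15 : ∀ u, (f 1 0) * ((e 0 0) * u) = -((e 0 0) * ((f 1 0) * u)) := swap' _ _ h15
  have h16 : (f 2 0) * (e 0 0) = -((e 0 0) * (f 2 0)) := anti _ _ (he 0) (hf 2)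
  have n16 : ∀ u, (f 2 0) * ((e 0 0) * u) = -((e 0 0) * ((f 2 0) * u)) := swap' _ _ h16
  have h23 : (e 2 0) * (e 1 0) = -((e 1 0) * (e 2 0)) := anti _ _ (he 1) (he 2)
  have n23 : ∀ u, (e 2 0) * ((e 1 0) * u) = -((e 1 0) * ((e 2 0) * u)) := swap' _ _ h23
  have h24 : (f 0 0) * (e 1 0) = -((e 1 0) * (f 0 0)) := anti _ _ (he 1) (hf 0)
  have n24 : ∀ u, (f 0 0) * ((e 1 0) * u) = -((e 1 0) * ((f 0 0) * u)) := swap' _ _ h24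
  have h25 : (f 1 0) * (e 1 0) = -((e 1 0) * (f 1 0)) := anti _ _ (he 1) (hf 1)
  have n25 : ∀ u, (f 1 0) * ((e 1 0) * u) = -((e 1 0) * ((f 1 0) * u)) := swap' _ _ h25
  have h26 : (f 2 0) * (e 1 0) = -((e 1 0) * (f 2 0)) := anti _ _ (he 1) (hf 2)
  have n26 : ∀ u, (f 2 0) * ((e 1 0) * u) = -((e 1 0) * ((f 2 0) * u)) := swap' _ _ h26
  have h34 : (f 0 0) * (e 2 0) = -((e 2 0) * (f 0 0)) := anti _ _ (he 2) (hf 0)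
  have n34 : ∀ u, (f 0 0) * ((e 2 0) * u) = -((e 2 0) * ((f 0 0) * u)) := swap' _ _ h34
  have h35 : (f 1 0) * (e 2 0) = -((e 2 0) * (f 1 0)) := anti _ _ (he 2) (hf 1)
  have n35 : ∀ u, (f 1 0) * ((e 2 0) * u) = -((e 2 0) * ((f 1 0) * u)) := swap' _ _ h35
  have h36 : (f 2 0) * (e 2 0) = -((e 2 0) * (f 2 0)) := anti _ _ (he 2) (hf 2)
  have n36 : ∀ u, (f 2 0) * ((e 2 0) * u) = -((e 2 0) * ((f 2 0) * u)) := swap' _ _ h36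
  have h45 : (f 1 0) * (f 0 0) = -((f 0 0) * (f 1 0)) := anti _ _ (hf 0) (hf 1)
  have n45 : ∀ u, (f 1 0) * ((f 0 0) * u) = -((f 0 0) * ((f 1 0) * u)) := swap' _ _ h45
  have h46 : (f 2 0) * (f 0 0) = -((f 0 0) * (f 2 0)) := anti _ _ (hf 0) (hf 2)
  have n46 : ∀ u, (f 2 0) * ((f 0 0) * u) = -((f 0 0) * ((f 2 0) * u)) := swap' _ _ h46
  have h56 : (f 2 0) * (f 1 0) = -((f 1 0) * (f 2 0)) := anti _ _ (hf 1) (hf 2)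
  have n56 : ∀ u, (f 2 0) * ((f 1 0) * u) = -((f 1 0) * ((f 2 0) * u)) := swap' _ _ h56
  refine ⟨?_, ?_, ?_⟩
  · simp only [Qminus, Qplus, blk, box, cross, Matrix.trace, Matrix.diag,
      Fintype.sum_sum_type, Fin.sum_univ_one, Fin.sum_univ_three,
      Matrix.add_apply, Matrix.mul_apply, Matrix.map_apply,
      Matrix.fromBlocks_apply₁₁, Matrix.fromBlocks_apply₁₂, Matrix.fromBlocks_apply₂₁,
      Matrix.fromBlocks_apply₂₂, Matrix.fromRows_apply_inl, Matrix.fromRows_apply_inr,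
      Matrix.fromCols_apply_inl, Matrix.fromCols_apply_inr,
      Matrix.smul_apply, Matrix.neg_apply, Matrix.sub_apply, Matrix.zero_apply,
      Matrix.transpose_apply, Matrix.of_apply, Matrix.cons_val', Matrix.cons_val_zero,
      Matrix.cons_val_one, Matrix.head_cons, Matrix.cons_val_two, Matrix.tail_cons,
      Matrix.cons_val_fin_one, Matrix.empty_val',  Matrix.head_fin_const]
    simp only [s0, t0, s1, t1, s2, t2, s3, t3, s4, t4, s5, t5, s6, t6, h01, n01, h02, n02, h03, n03, h04, n04, h05, n05, h06, n06, h12, n12, h13, n13, h14, n14, h15, n15, h16, n16, h23, n23, h24, n24, h25, n25, h26, n26, h34, n34, h35, n35, h36, n36, h45, n45, h46, n46, h56, n56, mul_add, add_mul, mul_sub, sub_mul, neg_mul, mul_neg, neg_neg,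
      smul_mul_assoc, mul_smul_comm, mul_assoc, mul_zero, zero_mul, smul_zero,
      neg_zero, add_zero, zero_add, smul_neg, smul_add, smul_sub, smul_smul]
    module
  · have hQ0 : Qzero e f = (algebraMap ℚ R (1/2 : ℚ)) • (blk 0 0 0 0 (-(box (cross e e + cross f f)))
        (-((2:R) • (box e * box f - box f * box e))) 0
        ((2:R) • (box e * box f - box f * box e))
        (-(box (cross e e + cross f f)))) := rfl
    have key : Matrix.trace (Qminus e f e0 δ * (blk 0 0 0 0 (-(box (cross e e + cross f f)))
        (-((2:R) • (box e * box f - box f * box e))) 0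
        ((2:R) • (box e * box f - box f * box e))
        (-(box (cross e e + cross f f)))) + (blk 0 0 0 0 (-(box (cross e e + cross f f)))
        (-((2:R) • (box e * box f - box f * box e))) 0
        ((2:R) • (box e * box f - box f * box e))
        (-(box (cross e e + cross f f)))) * Qminus e f e0 δ) = 0 := by
      simp only [Qminus, Qplus, blk, box, cross, om, Matrix.trace, Matrix.diag,
      Fintype.sum_sum_type, Fin.sum_univ_one, Fin.sum_univ_three,
      Matrix.add_apply, Matrix.mul_apply, Matrix.map_apply,
      Matrix.fromBlocks_apply₁₁, Matrix.fromBlocks_apply₁₂, Matrix.fromBlocks_apply₂₁,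
      Matrix.fromBlocks_apply₂₂, Matrix.fromRows_apply_inl, Matrix.fromRows_apply_inr,
      Matrix.fromCols_apply_inl, Matrix.fromCols_apply_inr,
      Matrix.smul_apply, Matrix.neg_apply, Matrix.sub_apply, Matrix.zero_apply,
      Matrix.transpose_apply, Matrix.of_apply, Matrix.cons_val', Matrix.cons_val_zero,
      Matrix.cons_val_one, Matrix.head_cons, Matrix.cons_val_two, Matrix.tail_cons,
      Matrix.cons_val_fin_one, Matrix.empty_val',  Matrix.head_fin_const]
      simp only [s0, t0, s1, t1, s2, t2, s3, t3, s4, t4, s5, t5, s6, t6, h01, n01, h02, n02, h03, n03, h04, n04, h05, n05, h06, n06, h12, n12, h13, n13, h14, n14, h15, n15, h16, n16, h23, n23, h24, n24, h25, n25, h26, n26, h34, n34, h35, n35, h36, n36, h45, n45, h46, n46, h56, n56, mul_add, add_mul, mul_sub, sub_mul, neg_mul, mul_neg, neg_neg,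
      smul_mul_assoc, mul_smul_comm, mul_assoc, mul_zero, zero_mul, smul_zero,
      neg_zero, add_zero, zero_add, smul_neg, smul_add, smul_sub, smul_smul]
      module
    rw [hQ0, Matrix.mul_smul, Matrix.smul_mul, ← smul_add, Matrix.trace_smul, key, smul_zero]
  · have hQ0 : Qzero e f = (algebraMap ℚ R (1/2 : ℚ)) • (blk 0 0 0 0 (-(box (cross e e + cross f f)))
        (-((2:R) • (box e * box f - box f * box e))) 0
        ((2:R) • (box e * box f - box f * box e))
        (-(box (cross e e + cross f f)))) := rfl
    have key : Matrix.trace (Qplus e f δ * (blk 0 0 0 0 (-(box (cross e e + cross f f)))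
        (-((2:R) • (box e * box f - box f * box e))) 0
        ((2:R) • (box e * box f - box f * box e))
        (-(box (cross e e + cross f f)))) + (blk 0 0 0 0 (-(box (cross e e + cross f f)))
        (-((2:R) • (box e * box f - box f * box e))) 0
        ((2:R) • (box e * box f - box f * box e))
        (-(box (cross e e + cross f f)))) * Qplus e f δ)
        = (32 * (1 + δ)) • (om e f * om e f) := by
      simp only [Qminus, Qplus, blk, box, cross, om, Matrix.trace, Matrix.diag,
      Fintype.sum_sum_type, Fin.sum_univ_one, Fin.sum_univ_three,
      Matrix.add_apply, Matrix.mul_apply, Matrix.map_apply,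
      Matrix.fromBlocks_apply₁₁, Matrix.fromBlocks_apply₁₂, Matrix.fromBlocks_apply₂₁,
      Matrix.fromBlocks_apply₂₂, Matrix.fromRows_apply_inl, Matrix.fromRows_apply_inr,
      Matrix.fromCols_apply_inl, Matrix.fromCols_apply_inr,
      Matrix.smul_apply, Matrix.neg_apply, Matrix.sub_apply, Matrix.zero_apply,
      Matrix.transpose_apply, Matrix.of_apply, Matrix.cons_val', Matrix.cons_val_zero,
      Matrix.cons_val_one, Matrix.head_cons, Matrix.cons_val_two, Matrix.tail_cons,
      Matrix.cons_val_fin_one, Matrix.empty_val',  Matrix.head_fin_const]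
      simp only [s0, t0, s1, t1, s2, t2, s3, t3, s4, t4, s5, t5, s6, t6, h01, n01, h02, n02, h03, n03, h04, n04, h05, n05, h06, n06, h12, n12, h13, n13, h14, n14, h15, n15, h16, n16, h23, n23, h24, n24, h25, n25, h26, n26, h34, n34, h35, n35, h36, n36, h45, n45, h46, n46, h56, n56, mul_add, add_mul, mul_sub, sub_mul, neg_mul, mul_neg, neg_neg,
      smul_mul_assoc, mul_smul_comm, mul_assoc, mul_zero, zero_mul, smul_zero,
      neg_zero, add_zero, zero_add, smul_neg, smul_add, smul_sub, smul_smul]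
      module
    rw [hQ0, Matrix.mul_smul, Matrix.smul_mul, ← smul_add, Matrix.trace_smul, key, smul_smul]
    have hc : (algebraMap ℚ R) (1/2 : ℚ) * 2 = 1 := by
      rw [show (2:R) = algebraMap ℚ R 2 from (map_ofNat _ 2).symm, ← _root_.map_mul]
      norm_num
    rw [show (algebraMap ℚ R) (1/2 : ℚ) * (32 * (1 + δ)) = 16 * (1 + δ) by
      linear_combination (16 * (1 + δ)) * hc]

end
end
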